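/- Let η be a positive equivalence relation. If there are at least two η-infinite r.e. sets, then there is an η-family that is explanatorily learnable but not weakly confidently learnable. -/

import Mathlib

namespace PEL

/-- Evaluation of the `e`-th partial recursive function (via the standard
numbering of `Nat.Partrec.Code`). -/
def evalCode (e : ℕ) (x : ℕ) : Part ℕ :=
  (Denumerable.ofNat Nat.Partrec.Code e).eval x

/-- The `e`-th recursively enumerable set `W_e = dom φ_e`. -/
def W (e : ℕ) : Set ℕ := {x | (evalCode e x).Dom}

/-- A set is r.e. iff it equals some `W_e`. -/
def RESet (S : Set ℕ) : Prop := ∃ e, W e = S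

/-- A positive equivalence relation: an r.e. equivalence relation on ℕ
with infinitely many equivalence classes. -/
structure PosEq where
  rel : ℕ → ℕ → Prop
  equiv : Equivalence rel
  re : ∃ e, ∀ x y, rel x y ↔ Nat.pair x y ∈ W e
  classes_infinite : (Set.range fun x => {y | rel x y}).Infinite

/-- The η-equivalence class of `x`. -/
def classOf (η : PosEq) (x : ℕ) : Set ℕ := {y | η.rel x y}

/-- A set is η-closed iff it is a union of η-equivalence classes. -/
def EtaClosed (η : PosEq) (S : Set ℕ) : Prop := ∀ x ∈ S, classOf η x ⊆ S

/-- A set is η-finite iff it is a union of finitely many η-equivalence classes. -/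
def EtaFinite (η : PosEq) (S : Set ℕ) : Prop :=
  EtaClosed η S ∧ (classOf η '' S).Finite

/-- A set is η-infinite iff it is a union of infinitely many η-equivalence classes. -/
def EtaInfinite (η : PosEq) (S : Set ℕ) : Prop :=
  EtaClosed η S ∧ (classOf η '' S).Infinite

/-- `f` is a one-one uniformly r.e. numbering of the class `C`:
`f` is computable, `i ↦ W_{f i}` is injective, and `C = {W_{f i} : i ∈ ℕ}`. -/
def OneOneNumbering (f : ℕ → ℕ) (C : Set (Set ℕ)) : Prop :=
  Computable f ∧ (∀ i j, W (f i) = W (f j) → i = j) ∧ C = Set.range fun i => W (f i)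

/-- An η-family: an (automatically infinite) class of η-closed r.e. sets
admitting a one-one uniformly r.e. numbering. -/
def EtaFamily (η : PosEq) (C : Set (Set ℕ)) : Prop :=
  (∀ L ∈ C, EtaClosed η L) ∧ ∃ f, OneOneNumbering f C

/-- `a η n` is the `n`-th (in ascending order) least representative of an
η-equivalence class. -/
noncomputable def a (η : PosEq) (n : ℕ) : ℕ := Nat.nth (fun x => ∀ y, η.rel x y → x ≤ y) n

/-- `A η n = [a_0] ∪ … ∪ [a_{n-1}]`. -/
def A (η : PosEq) (n : ℕ) : Set ℕ := {x | ∃ m < n, η.rel (a η m) x}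

/-- The ascending family `𝒜_η = {A_n : n ∈ ℕ}`. -/
def ascendingFamily (η : PosEq) : Set (Set ℕ) := Set.range (A η)

/-- A learner: a map from finite sequences over ℕ ∪ {#} (with `none` as the
pause symbol `#`) to hypotheses in ℕ ∪ {?} (with `none` as `?`). -/
abbrev Learner := List (Option ℕ) → Option ℕ

/-- The content of a text. -/
def cntT (T : ℕ → Option ℕ) : Set ℕ := {x | ∃ n, T n = some x}

/-- `T` is a text for `L`. -/
def IsText (T : ℕ → Option ℕ) (L : Set ℕ) : Prop := cntT T = L

/-- The initial segment `T[n] = T(0), …, T(n-1)`. -/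
def seg (T : ℕ → Option ℕ) (n : ℕ) : List (Option ℕ) := (List.range n).map T

/-- The content of a finite sequence. -/
def cntL (σ : List (Option ℕ)) : Set ℕ := {x | some x ∈ σ}

/-- Explanatory learning with hypotheses interpreted in hypothesis space `H`. -/
def ExLearnsIn (H : ℕ → Set ℕ) (M : Learner) (C : Set (Set ℕ)) : Prop :=
  ∀ L ∈ C, ∀ T, IsText T L →
    ∃ n e, M (seg T n) = some e ∧ H e = L ∧ ∀ j, n ≤ j → M (seg T j) = M (seg T n)

/-- Behaviourally correct learning with hypothesis space `H`. -/
def BCLearnsIn (H : ℕ → Set ℕ) (M : Learner) (C : Set (Set ℕ)) : Prop :=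
  ∀ L ∈ C, ∀ T, IsText T L →
    ∃ n, ∀ j, n ≤ j → ∃ e, M (seg T j) = some e ∧ H e = L

/-- Finite (one-shot) learning with hypothesis space `H`. -/
def FinLearnsIn (H : ℕ → Set ℕ) (M : Learner) (C : Set (Set ℕ)) : Prop :=
  ∀ L ∈ C, ∀ T, IsText T L →
    ∃ n e, M (seg T n) = some e ∧ H e = L ∧ (∀ m, m < n → M (seg T m) = none) ∧
      ∀ j, n ≤ j → M (seg T j) = M (seg T n)

/-- The sequence of hypotheses of `M` on text `T` converges. -/
def ConvergesOn (M : Learner) (T : ℕ → Option ℕ) : Prop :=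
  ∃ n, ∀ j, n ≤ j → M (seg T j) = M (seg T n)

/-- Confident learning with hypothesis space `H`: explanatory learning with
convergence on every text for every subset of ℕ. -/
def ConfLearnsIn (H : ℕ → Set ℕ) (M : Learner) (C : Set (Set ℕ)) : Prop :=
  ExLearnsIn H M C ∧ ∀ T, ConvergesOn M T

/-- Vacillatory learning with hypothesis space `H`. -/
def VacLearnsIn (H : ℕ → Set ℕ) (M : Learner) (C : Set (Set ℕ)) : Prop :=
  BCLearnsIn H M C ∧
    ∀ L ∈ C, ∀ T, IsText T L → {h : Option ℕ | ∃ n, 1 ≤ n ∧ M (seg T n) = h}.Finite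

/-- Weakly confident learning with hypothesis space `H`: explanatory learning
with convergence on every text consistent with the class. -/
def WConfLearnsIn (H : ℕ → Set ℕ) (M : Learner) (C : Set (Set ℕ)) : Prop :=
  ExLearnsIn H M C ∧ ∀ T, (∃ L ∈ C, cntT T ⊆ L) → ConvergesOn M T

def ExLearnable (C : Set (Set ℕ)) : Prop :=
  ∃ M : Learner, Computable M ∧ ExLearnsIn W M C

def BCLearnable (C : Set (Set ℕ)) : Prop :=
  ∃ M : Learner, Computable M ∧ BCLearnsIn W M C

def FinLearnable (C : Set (Set ℕ)) : Prop :=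
  ∃ M : Learner, Computable M ∧ FinLearnsIn W M C

def ConfLearnable (C : Set (Set ℕ)) : Prop :=
  ∃ M : Learner, Computable M ∧ ConfLearnsIn W M C

def VacLearnable (C : Set (Set ℕ)) : Prop :=
  ∃ M : Learner, Computable M ∧ VacLearnsIn W M C

def WConfLearnable (C : Set (Set ℕ)) : Prop :=
  ∃ M : Learner, Computable M ∧ WConfLearnsIn W M C


/-! ### Auxiliary material for Statement 16 -/

section Stmt16Aux

open Nat.Partrec (Code)
open Nat.Partrec.Code

/-- Bounded universal quantifier as a `Bool`, shaped for `Primrec.nat_rec'`. -/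
def natAll (p : ℕ → Bool) (n : ℕ) : Bool :=
  Nat.rec true (fun k ih => ih && p k) n

@[simp] lemma natAll_zero (p : ℕ → Bool) : natAll p 0 = true := rfl

@[simp] lemma natAll_succ (p : ℕ → Bool) (n : ℕ) :
    natAll p (n + 1) = (natAll p n && p n) := rfl

lemma natAll_eq_true {p : ℕ → Bool} {n : ℕ} :
    natAll p n = true ↔ ∀ k < n, p k = true := by
  induction n with
  | zero => simp
  | succ n ih =>
    simp only [natAll_succ, Bool.and_eq_true, ih, Nat.lt_succ_iff_lt_or_eq]
    constructor
    · rintro ⟨h1, h2⟩ k (hk | rfl)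
      · exact h1 k hk
      · exact h2
    · intro h
      exact ⟨fun k hk => h k (Or.inl hk), h n (Or.inr rfl)⟩

def natAny (p : ℕ → Bool) (n : ℕ) : Bool := !(natAll (fun k => !(p k)) n)

lemma natAny_eq_true {p : ℕ → Bool} {n : ℕ} :
    natAny p n = true ↔ ∃ k < n, p k = true := by
  simp only [natAny, Bool.not_eq_true', Bool.not_eq_true]
  rw [← Bool.not_eq_true, not_iff_comm]
  push_neg
  constructor
  · intro h
    rw [natAll_eq_true]
    intro k hk
    simpa using h k hk
  · intro h k hk
    rw [natAll_eq_true] at h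
    simpa using h k hk

lemma primrec_natAll {α} [Primcodable α] {p : α → ℕ → Bool} (hp : Primrec₂ p) :
    Primrec₂ fun a n => natAll (p a) n := by
  have h : Primrec₂ fun (q : α × ℕ) (r : ℕ × Bool) => (r.2 && p q.1 r.1) := by
    have : Primrec₂ fun (q : α × ℕ) (r : ℕ × Bool) =>
        bif r.2 then p q.1 r.1 else false :=
      Primrec.cond (Primrec.snd.comp Primrec.snd)
        (hp.comp (Primrec.fst.comp Primrec.fst) (Primrec.fst.comp Primrec.snd))
        (Primrec.const false)
    exact this.of_eq (fun q r => by cases r.2 <;> simp)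
  exact Primrec.nat_rec' Primrec.snd (Primrec.const true) h

lemma primrec_natAny {α} [Primcodable α] {p : α → ℕ → Bool} (hp : Primrec₂ p) :
    Primrec₂ fun a n => natAny (p a) n := by
  have hnot : Primrec₂ fun (a : α) (n : ℕ) => !(p a n) :=
    (Primrec.dom_bool Bool.not).comp hp
  have := primrec_natAll hnot
  exact (Primrec.dom_bool Bool.not).comp this

/-- The r.e. set given by a code. -/
def WC (c : Code) : Set ℕ := {x | (c.eval x).Dom}

lemma W_encode (c : Code) : W (Encodable.encode c) = WC c := by
  simp [W, evalCode, WC]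

/-- `x` is confirmed in `W_c` within `u` steps. -/
def inAt (c : Code) (x u : ℕ) : Bool := (evaln u c x).isSome

lemma inAt_mono {c : Code} {x u v : ℕ} (huv : u ≤ v) (h : inAt c x u = true) :
    inAt c x v = true := by
  rcases Option.isSome_iff_exists.1 h with ⟨a, ha⟩
  exact Option.isSome_iff_exists.2 ⟨a, evaln_mono huv ha⟩

lemma inAt_sound {c : Code} {x u : ℕ} (h : inAt c x u = true) : x ∈ WC c := by
  rcases Option.isSome_iff_exists.1 h with ⟨a, ha⟩
  exact Part.dom_iff_mem.2 ⟨a, evaln_sound ha⟩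

lemma inAt_bound {c : Code} {x u : ℕ} (h : inAt c x u = true) : x < u := by
  rcases Option.isSome_iff_exists.1 h with ⟨a, ha⟩
  exact evaln_bound ha

lemma mem_WC_iff {c : Code} {x : ℕ} : x ∈ WC c ↔ ∃ u, inAt c x u = true := by
  constructor
  · intro h
    rcases Part.dom_iff_mem.1 h with ⟨a, ha⟩
    rcases evaln_complete.1 ha with ⟨u, hu⟩
    exact ⟨u, Option.isSome_iff_exists.2 ⟨a, hu⟩⟩
  · rintro ⟨u, hu⟩
    exact inAt_sound hu

lemma primrec_inAt {c : Code} : Primrec₂ fun x u => inAt c x u := by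
  have h1 : Primrec fun p : ℕ × ℕ => evaln p.2 c p.1 :=
    primrec_evaln.comp (((Primrec.snd).pair (Primrec.const c)).pair Primrec.fst)
  exact (Primrec.option_isSome.comp h1).to₂

end Stmt16Aux
section Stmt16Ctx

open Nat.Partrec (Code)
open Nat.Partrec.Code

/-- A working context for the construction: codes for `η` and for an
η-infinite η-closed r.e. set `S`, and an element `c ∉ S`. -/
structure Ctx (η : PosEq) where
  cη : Code
  hη : ∀ x y, η.rel x y ↔ Nat.pair x y ∈ WC cη
  cS : Code
  c : ℕ
  hSclosed : EtaClosed η (WC cS)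
  hSinf : (classOf η '' (WC cS)).Infinite
  hc : c ∉ WC cS

namespace Ctx

variable {η : PosEq} (K : Ctx η)

/-- The distinguished η-infinite set. -/
def S : Set ℕ := WC K.cS

/-- `η.rel x y` confirmed within `u` steps. -/
def relAt (x y u : ℕ) : Bool := inAt K.cη (Nat.pair x y) u

/-- `x ∈ S` confirmed within `u` steps. -/
def sAt (x u : ℕ) : Bool := inAt K.cS x u

lemma relAt_sound {x y u : ℕ} (h : K.relAt x y u = true) : η.rel x y :=
  (K.hη x y).2 (inAt_sound h)

lemma relAt_complete {x y : ℕ} (h : η.rel x y) : ∃ u, K.relAt x y u = true :=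
  mem_WC_iff.1 ((K.hη x y).1 h)

lemma relAt_mono {x y u v : ℕ} (huv : u ≤ v) (h : K.relAt x y u = true) :
    K.relAt x y v = true := inAt_mono huv h

lemma sAt_sound {x u : ℕ} (h : K.sAt x u = true) : x ∈ K.S := inAt_sound h

lemma sAt_complete {x : ℕ} (h : x ∈ K.S) : ∃ u, K.sAt x u = true := mem_WC_iff.1 h

lemma sAt_mono {x u v : ℕ} (huv : u ≤ v) (h : K.sAt x u = true) :
    K.sAt x v = true := inAt_mono huv h

lemma sAt_bound {x u : ℕ} (h : K.sAt x u = true) : x < u := inAt_bound h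

lemma relAt_bound {x y u : ℕ} (h : K.relAt x y u = true) : Nat.pair x y < u :=
  inAt_bound h

/-- The closure of the stage-`t` approximation of `S`: the union of the
η-classes of all elements enumerated into `S` within `t` steps. -/
def Γ (t : ℕ) : Set ℕ := {x | ∃ y, K.sAt y t = true ∧ η.rel y x}

/-- `x ∈ Γ t` confirmed within `u` steps. -/
def ΓAt (t x u : ℕ) : Bool := natAny (fun y => K.sAt y t && K.relAt y x u) t

lemma ΓAt_sound {t x u : ℕ} (h : K.ΓAt t x u = true) : x ∈ K.Γ t := by
  rcases natAny_eq_true.1 h with ⟨y, _, hy⟩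
  rcases (Bool.and_eq_true _ _).mp hy with ⟨h1, h2⟩
  exact ⟨y, h1, K.relAt_sound h2⟩

lemma ΓAt_complete {t x : ℕ} (h : x ∈ K.Γ t) : ∃ u, K.ΓAt t x u = true := by
  rcases h with ⟨y, h1, h2⟩
  rcases K.relAt_complete h2 with ⟨u, hu⟩
  refine ⟨u, natAny_eq_true.2 ⟨y, K.sAt_bound h1, ?_⟩⟩
  exact (Bool.and_eq_true _ _).mpr ⟨h1, hu⟩

lemma ΓAt_mono {t x u v : ℕ} (huv : u ≤ v) (h : K.ΓAt t x u = true) :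
    K.ΓAt t x v = true := by
  rcases natAny_eq_true.1 h with ⟨y, hyt, hy⟩
  rcases (Bool.and_eq_true _ _).mp hy with ⟨h1, h2⟩
  exact natAny_eq_true.2 ⟨y, hyt, (Bool.and_eq_true _ _).mpr ⟨h1, K.relAt_mono huv h2⟩⟩

lemma Γ_mono {t t' : ℕ} (h : t ≤ t') : K.Γ t ⊆ K.Γ t' := by
  rintro x ⟨y, h1, h2⟩
  exact ⟨y, K.sAt_mono h h1, h2⟩

lemma Γ_closed (t : ℕ) : EtaClosed η (K.Γ t) := by
  rintro x ⟨y, h1, h2⟩ z hz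
  exact ⟨y, h1, η.equiv.trans h2 hz⟩

lemma Γ_subset_S (t : ℕ) : K.Γ t ⊆ K.S := by
  rintro x ⟨y, h1, h2⟩
  exact K.hSclosed y (K.sAt_sound h1) h2

lemma sAt_mem_Γ {y t : ℕ} (h : K.sAt y t = true) : y ∈ K.Γ t :=
  ⟨y, h, η.equiv.refl y⟩

/-- `Γ` grows (by a whole new class) at time `t`. -/
def good (t : ℕ) : Prop := ∃ y, K.sAt y (t + 1) = true ∧ y ∉ K.Γ t

lemma Γ_succ_of_not_good {t : ℕ} (h : ¬ K.good t) : K.Γ (t + 1) = K.Γ t := by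
  apply Set.Subset.antisymm
  · rintro x ⟨y, h1, h2⟩
    have hy : y ∈ K.Γ t := by
      by_contra hy
      exact h ⟨y, h1, hy⟩
    exact K.Γ_closed t y hy h2
  · exact K.Γ_mono (Nat.le_succ t)

lemma Γ_const_of_not_good {t t' : ℕ} (h : t ≤ t')
    (hng : ∀ u, t ≤ u → ¬ K.good u) : K.Γ t' = K.Γ t := by
  induction t' with
  | zero => cases Nat.le_zero.1 h; rfl
  | succ n ih =>
    rcases Nat.lt_or_ge t (n+1) with hlt | hge
    · have hn : t ≤ n := Nat.lt_succ_iff.1 hlt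
      rw [K.Γ_succ_of_not_good (hng n hn), ih hn]
    · cases Nat.le_antisymm h hge; rfl

end Ctx

end Stmt16Ctx
section Stmt16Math

open Nat.Partrec (Code)
open Nat.Partrec.Code

lemma exists_uniform_stage {s : Finset ℕ} {P : ℕ → ℕ → Prop}
    (hmono : ∀ y u v, u ≤ v → P y u → P y v)
    (h : ∀ y ∈ s, ∃ u, P y u) : ∃ u, ∀ y ∈ s, P y u := by
  classical
  induction s using Finset.induction_on with
  | empty => exact ⟨0, by simp⟩
  | @insert a s ha ih =>
    rcases ih (fun y hy => h y (Finset.mem_insert_of_mem hy)) with ⟨u₁, hu₁⟩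
    rcases h a (Finset.mem_insert_self a s) with ⟨u₂, hu₂⟩
    refine ⟨max u₁ u₂, ?_⟩
    intro y hy
    rcases Finset.mem_insert.1 hy with rfl | hy
    · exact hmono y u₂ _ (le_max_right _ _) hu₂
    · exact hmono y u₁ _ (le_max_left _ _) (hu₁ y hy)

lemma nth_le_nth_of_subset {P Q : ℕ → Prop} (hQ : (setOf Q).Infinite)
    (hsub : ∀ t, Q t → P t) (n : ℕ) : Nat.nth P n ≤ Nat.nth Q n := by
  have hP : (setOf P).Infinite := hQ.mono hsub
  induction n using Nat.strong_induction_on with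
  | _ n ih =>
    have hmem : P (Nat.nth Q n) ∧ ∀ k < n, Nat.nth P k < Nat.nth Q n := by
      constructor
      · exact hsub _ (Nat.nth_mem_of_infinite hQ n)
      · intro k hk
        calc Nat.nth P k ≤ Nat.nth Q k := ih k hk
        _ < Nat.nth Q n := (Nat.nth_lt_nth hQ).2 hk
    exact (Nat.isLeast_nth_of_infinite hP n).2 ⟨hmem.1, hmem.2⟩

lemma nth_eq_nth_of_agree {P Q : ℕ → Prop} (hQ : (setOf Q).Infinite)
    (hsub : ∀ t, Q t → P t) {n : ℕ}
    (hagree : ∀ t ≤ Nat.nth Q n, P t → Q t) :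
    ∀ m ≤ n, Nat.nth P m = Nat.nth Q m := by
  have hP : (setOf P).Infinite := hQ.mono hsub
  intro m hm
  induction m using Nat.strong_induction_on with
  | _ m ih =>
    have hle : Nat.nth P m ≤ Nat.nth Q m := nth_le_nth_of_subset hQ hsub m
    have hge : Nat.nth Q m ≤ Nat.nth P m := by
      refine (Nat.isLeast_nth_of_infinite hQ m).2 ⟨?_, ?_⟩
      · refine hagree _ ?_ (Nat.nth_mem_of_infinite hP m)
        calc Nat.nth P m ≤ Nat.nth Q m := hle
        _ ≤ Nat.nth Q n := (Nat.nth_le_nth hQ).2 hm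
      · intro k hk
        rw [← ih k hk (le_trans (le_of_lt hk) hm)]
        exact (Nat.nth_lt_nth hP).2 hk
    exact le_antisymm hle hge

lemma classOf_eq_of_rel {η : PosEq} {x y : ℕ} (h : η.rel y x) :
    classOf η y = classOf η x := by
  ext z
  exact ⟨fun hz => η.equiv.trans (η.equiv.symm h) hz, fun hz => η.equiv.trans h hz⟩

namespace Ctx

variable {η : PosEq} (K : Ctx η)

lemma Γ_classes_finite (t : ℕ) : (classOf η '' K.Γ t).Finite := by
  have h : classOf η '' K.Γ t ⊆ classOf η '' {y | y < t} := by
    rintro _ ⟨x, ⟨y, h1, h2⟩, rfl⟩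
    exact ⟨y, K.sAt_bound h1, classOf_eq_of_rel h2⟩
  exact ((Set.finite_Iio t).image _).subset h

lemma exists_mem_S_not_Γ (t : ℕ) : ∃ x, x ∈ K.S ∧ x ∉ K.Γ t := by
  by_contra hcon
  push_neg at hcon
  have hsub : K.S ⊆ K.Γ t := fun x hx => hcon x hx
  have : (classOf η '' K.S).Finite := (K.Γ_classes_finite t).subset (Set.image_mono hsub)
  exact K.hSinf this

lemma S_infinite : K.S.Infinite := by
  intro hfin
  exact K.hSinf ((hfin.image _))

lemma good_infinite : {t | K.good t}.Infinite := by
  by_contra hfin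
  rw [Set.not_infinite] at hfin
  have hf : {t | K.good t}.Finite := hfin
  rcases hf.bddAbove with ⟨T, hT⟩
  have hng : ∀ u, T + 1 ≤ u → ¬ K.good u := by
    intro u hu hgood
    have := hT hgood
    omega
  rcases K.exists_mem_S_not_Γ (T + 1) with ⟨x, hxS, hxΓ⟩
  rcases K.sAt_complete hxS with ⟨u, hu⟩
  have hx : x ∈ K.Γ u := K.sAt_mem_Γ hu
  rcases le_or_gt u (T + 1) with hle | hlt
  · exact hxΓ (K.Γ_mono hle hx)
  · rw [K.Γ_const_of_not_good (le_of_lt hlt) hng] at hx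
    exact hxΓ hx

/-- Whether `t` has been *confirmed not good* within `u` steps: every element
in the stage-`(t+1)` approximation of `S` is confirmed in `Γ t` within `u`
steps. -/
def badAt (t u : ℕ) : Bool := natAll (fun y => !(K.sAt y (t+1)) || K.ΓAt t y u) (t+1)

lemma badAt_mono {t u v : ℕ} (huv : u ≤ v) (h : K.badAt t u = true) :
    K.badAt t v = true := by
  rw [badAt, natAll_eq_true] at *
  intro y hy
  have := h y hy
  rcases Bool.or_eq_true_iff.1 this with h1 | h1
  · exact Bool.or_eq_true_iff.2 (Or.inl h1)
  · exact Bool.or_eq_true_iff.2 (Or.inr (K.ΓAt_mono huv h1))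

lemma badAt_sound {t u : ℕ} (h : K.badAt t u = true) : ¬ K.good t := by
  rintro ⟨y, h1, h2⟩
  rw [badAt, natAll_eq_true] at h
  have hy := h y (K.sAt_bound h1)
  rcases Bool.or_eq_true_iff.1 hy with h3 | h3
  · rw [h1] at h3; simp at h3
  · exact h2 (K.ΓAt_sound h3)

lemma badAt_complete {t : ℕ} (h : ¬ K.good t) : ∃ u, K.badAt t u = true := by
  have hall : ∀ y ∈ Finset.range (t + 1), ∃ u,
      (!(K.sAt y (t+1)) || K.ΓAt t y u) = true := by
    intro y _
    by_cases hy : K.sAt y (t + 1) = true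
    · have hyΓ : y ∈ K.Γ t := by
        by_contra hyΓ
        exact h ⟨y, hy, hyΓ⟩
      rcases K.ΓAt_complete hyΓ with ⟨u, hu⟩
      exact ⟨u, Bool.or_eq_true_iff.2 (Or.inr hu)⟩
    · refine ⟨0, Bool.or_eq_true_iff.2 (Or.inl ?_)⟩
      simp [Bool.not_eq_true] at hy ⊢
      exact hy
  have hmono : ∀ y u v, u ≤ v → (!(K.sAt y (t+1)) || K.ΓAt t y u) = true →
      (!(K.sAt y (t+1)) || K.ΓAt t y v) = true := by
    intro y u v huv hy
    rcases Bool.or_eq_true_iff.1 hy with h1 | h1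
    · exact Bool.or_eq_true_iff.2 (Or.inl h1)
    · exact Bool.or_eq_true_iff.2 (Or.inr (K.ΓAt_mono huv h1))
  rcases exists_uniform_stage hmono hall with ⟨u, hu⟩
  refine ⟨u, ?_⟩
  rw [badAt, natAll_eq_true]
  intro y hy
  exact hu y (Finset.mem_range.2 hy)

lemma badAt_false_of_good {t u : ℕ} (h : K.good t) : K.badAt t u = false := by
  by_contra hb
  rw [Bool.not_eq_false] at hb
  exact K.badAt_sound hb h

lemma apGood_infinite (u : ℕ) : {t | K.badAt t u = false}.Infinite :=
  K.good_infinite.mono (fun t ht => K.badAt_false_of_good ht)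

/-- The `n`-th good stage. -/
noncomputable def kth (n : ℕ) : ℕ := Nat.nth K.good n

lemma good_kth (n : ℕ) : K.good (K.kth n) := Nat.nth_mem_of_infinite K.good_infinite n

lemma kth_lt_kth {n m : ℕ} (h : n < m) : K.kth n < K.kth m :=
  (Nat.nth_lt_nth K.good_infinite).2 h

/-- Marker: the stage-`u` approximation to `kth n`. -/
noncomputable def p (n u : ℕ) : ℕ := Nat.nth (fun t => K.badAt t u = false) n

lemma p_le_kth (n u : ℕ) : K.p n u ≤ K.kth n :=
  nth_le_nth_of_subset K.good_infinite (fun t ht => K.badAt_false_of_good ht) n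

lemma p_eventually (n : ℕ) : ∃ U, ∀ u, U ≤ u → K.p n u = K.kth n := by
  have hall : ∀ t ∈ Finset.range (K.kth n + 1), ∃ u,
      (K.good t ∨ K.badAt t u = true) := by
    intro t _
    by_cases h : K.good t
    · exact ⟨0, Or.inl h⟩
    · rcases K.badAt_complete h with ⟨u, hu⟩
      exact ⟨u, Or.inr hu⟩
  rcases exists_uniform_stage (P := fun t u => (K.good t ∨ K.badAt t u = true))
    (fun t u v huv ht => ht.imp id (K.badAt_mono huv)) hall with ⟨U, hU⟩
  refine ⟨U, fun u hu => ?_⟩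
  have hagree : ∀ t ≤ Nat.nth K.good n, (K.badAt t u = false) → K.good t := by
    intro t ht hb
    rcases hU t (Finset.mem_range.2 (Nat.lt_succ_of_le ht)) with h | h
    · exact h
    · rw [K.badAt_mono hu h] at hb
      exact absurd hb (by simp)
  exact nth_eq_nth_of_agree K.good_infinite
    (fun t ht => K.badAt_false_of_good ht) hagree n le_rfl

/-- The `n`-th distinct nonempty member of the ascending chain. -/
noncomputable def V (n : ℕ) : Set ℕ := K.Γ (K.kth n + 1)

lemma V_subset_S (n : ℕ) : K.V n ⊆ K.S := K.Γ_subset_S _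

lemma V_closed (n : ℕ) : EtaClosed η (K.V n) := K.Γ_closed _

lemma kth_mono {n m : ℕ} (h : n ≤ m) : K.kth n ≤ K.kth m :=
  (Nat.nth_le_nth K.good_infinite).2 h

lemma V_mono {n m : ℕ} (h : n ≤ m) : K.V n ⊆ K.V m :=
  K.Γ_mono (by have := K.kth_mono h; omega)

lemma V_strict {n m : ℕ} (h : n < m) : ∃ y, y ∈ K.V m ∧ y ∉ K.V n := by
  rcases K.good_kth m with ⟨y, h1, h2⟩
  refine ⟨y, K.sAt_mem_Γ h1, fun hy => h2 ?_⟩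
  have : K.kth n + 1 ≤ K.kth m := Nat.succ_le_of_lt (K.kth_lt_kth h)
  exact K.Γ_mono this hy

lemma V_nonempty (n : ℕ) : (K.V n).Nonempty := by
  rcases K.good_kth n with ⟨y, h1, _⟩
  exact ⟨y, K.sAt_mem_Γ h1⟩

lemma V_ne {n m : ℕ} (h : n ≠ m) : K.V n ≠ K.V m := by
  rcases Nat.lt_or_ge n m with hlt | hge
  · rcases K.V_strict hlt with ⟨y, hy1, hy2⟩
    intro he
    rw [he] at hy2
    exact hy2 hy1
  · have hlt : m < n := lt_of_le_of_ne hge (Ne.symm h)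
    rcases K.V_strict hlt with ⟨y, hy1, hy2⟩
    intro he
    rw [← he] at hy2
    exact hy2 hy1

lemma c_not_mem_V (n : ℕ) : K.c ∉ K.V n := fun h => K.hc (K.V_subset_S n h)

/-- The set enumerated by the `n`-th member of the one-one numbering. -/
def Wh (n : ℕ) : Set ℕ := {x | ∃ u, K.ΓAt (K.p n u + 1) x u = true}

lemma Wh_eq_V (n : ℕ) : K.Wh n = K.V n := by
  apply Set.Subset.antisymm
  · rintro x ⟨u, hu⟩
    have hx : x ∈ K.Γ (K.p n u + 1) := K.ΓAt_sound hu
    exact K.Γ_mono (by have := K.p_le_kth n u; omega) hx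
  · intro x hx
    rcases K.p_eventually n with ⟨U, hU⟩
    rcases K.ΓAt_complete hx with ⟨u₀, hu₀⟩
    refine ⟨max U u₀, ?_⟩
    rw [hU _ (le_max_left _ _)]
    exact K.ΓAt_mono (le_max_right _ _) hu₀

end Ctx

end Stmt16Math
section Stmt16Comp

open Nat.Partrec (Code)
open Nat.Partrec.Code

namespace Ctx

variable {η : PosEq} (K : Ctx η)

lemma primrec_inAt' (c : Code) : Primrec₂ fun x u => inAt c x u := primrec_inAt

lemma primrec_sAt : Primrec₂ fun y t => K.sAt y t := primrec_inAt

lemma primrec_relAt₂ : Primrec₂ fun (q : ℕ × ℕ) (u : ℕ) => K.relAt q.1 q.2 u := by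
  have h : Primrec fun q : (ℕ × ℕ) × ℕ => inAt K.cη (Nat.pair q.1.1 q.1.2) q.2 :=
    primrec_inAt.comp (Primrec₂.natPair.comp (Primrec.fst.comp Primrec.fst)
      (Primrec.snd.comp Primrec.fst)) Primrec.snd
  exact h.to₂

lemma primrec_ΓAt : Primrec fun q : (ℕ × ℕ) × ℕ => K.ΓAt q.1.1 q.1.2 q.2 := by
  -- inner predicate: fun (a : (ℕ × ℕ) × ℕ) (y : ℕ) => K.sAt y a.1.1 && K.relAt y a.1.2 a.2
  have h1 : Primrec fun q : ((ℕ × ℕ) × ℕ) × ℕ => K.sAt q.2 q.1.1.1 :=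
    K.primrec_sAt.comp Primrec.snd ((Primrec.fst.comp Primrec.fst).comp Primrec.fst)
  have h2 : Primrec fun q : ((ℕ × ℕ) × ℕ) × ℕ => K.relAt q.2 q.1.1.2 q.1.2 :=
    K.primrec_relAt₂.comp
      (Primrec.snd.pair ((Primrec.snd.comp Primrec.fst).comp Primrec.fst))
      (Primrec.snd.comp Primrec.fst)
  have hp : Primrec₂ fun (a : (ℕ × ℕ) × ℕ) (y : ℕ) =>
      (K.sAt y a.1.1 && K.relAt y a.1.2 a.2) :=
    ((Primrec.dom_bool₂ (· && ·)).comp h1 h2).to₂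
  have := (primrec_natAny hp).comp Primrec.id (Primrec.fst.comp Primrec.fst)
  exact this.of_eq (fun q => rfl)

lemma primrec_badAt : Primrec₂ fun t u => K.badAt t u := by
  have h1 : Primrec fun q : (ℕ × ℕ) × ℕ => K.sAt q.2 (q.1.1 + 1) :=
    K.primrec_sAt.comp Primrec.snd (Primrec.succ.comp (Primrec.fst.comp Primrec.fst))
  have h2 : Primrec fun q : (ℕ × ℕ) × ℕ => K.ΓAt q.1.1 q.2 q.1.2 :=
    K.primrec_ΓAt.comp (((Primrec.fst.comp Primrec.fst).pair Primrec.snd).pair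
      (Primrec.snd.comp Primrec.fst))
  have hp : Primrec₂ fun (a : ℕ × ℕ) (y : ℕ) => (!(K.sAt y (a.1 + 1)) || K.ΓAt a.1 y a.2) :=
    ((Primrec.dom_bool₂ (· || ·)).comp ((Primrec.dom_bool (!·)).comp h1) h2).to₂
  have := (primrec_natAll hp).comp Primrec.id (Primrec.succ.comp Primrec.fst)
  exact this.of_eq (fun q => rfl)

/-- Primitive recursive count of apparently-good stages below `m` (at stage `u`). -/
def cntAG (u m : ℕ) : ℕ := Nat.rec 0 (fun k ih => ih + (bif K.badAt k u then 0 else 1)) m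

lemma primrec_cntAG : Primrec₂ K.cntAG := by
  have hh : Primrec₂ fun (a : ℕ × ℕ) (r : ℕ × ℕ) =>
      (r.2 + (bif K.badAt r.1 a.1 then 0 else 1)) := by
    have hb : Primrec fun q : (ℕ × ℕ) × ℕ × ℕ => K.badAt q.2.1 q.1.1 :=
      K.primrec_badAt.comp (Primrec.fst.comp Primrec.snd) (Primrec.fst.comp Primrec.fst)
    exact (Primrec.nat_add.comp (Primrec.snd.comp Primrec.snd)
      (Primrec.cond hb (Primrec.const 0) (Primrec.const 1))).to₂
  have h := Primrec.nat_rec' (α := ℕ × ℕ) (β := ℕ) (f := fun a => a.2)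
    (g := fun _ => 0) (h := fun a r => r.2 + (bif K.badAt r.1 a.1 then 0 else 1))
    Primrec.snd (Primrec.const 0) hh
  exact h.to₂.of_eq (fun u m => rfl)

lemma cntAG_eq_count (u m : ℕ) :
    K.cntAG u m = Nat.count (fun t => K.badAt t u = false) m := by
  induction m with
  | zero => rfl
  | succ m ih =>
    rw [Nat.count_succ]
    show K.cntAG u m + (bif K.badAt m u then 0 else 1) = _
    rw [ih]
    cases hb : K.badAt m u <;> simp [hb]

lemma computable_p : Computable₂ K.p := by
  have hpred : Primrec₂ fun (q : ℕ × ℕ) (m : ℕ) =>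
      (!(K.badAt m q.2) && decide (K.cntAG q.2 m = q.1)) := by
    have h1 : Primrec fun a : (ℕ × ℕ) × ℕ => !(K.badAt a.2 a.1.2) :=
      (Primrec.dom_bool (!·)).comp
        (K.primrec_badAt.comp Primrec.snd (Primrec.snd.comp Primrec.fst))
    have h2 : Primrec fun a : (ℕ × ℕ) × ℕ => decide (K.cntAG a.1.2 a.2 = a.1.1) :=
      PrimrecPred.decide (Primrec.eq.comp
        (K.primrec_cntAG.comp (Primrec.snd.comp Primrec.fst) Primrec.snd)
        (Primrec.fst.comp Primrec.fst))
    exact ((Primrec.dom_bool₂ (· && ·)).comp h1 h2).to₂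
  have hf := Partrec.rfind hpred.to_comp.partrec₂
  apply Computable₂.mk
  apply Partrec.of_eq_tot hf
  rintro ⟨n, u⟩
  rw [Nat.mem_rfind]
  simp only [PFun.coe_val, Part.mem_some_iff]
  constructor
  · have h1 : K.badAt (K.p n u) u = false :=
      Nat.nth_mem_of_infinite (K.apGood_infinite u) n
    have h2 : K.cntAG u (K.p n u) = n := by
      rw [K.cntAG_eq_count]
      exact Nat.count_nth_of_infinite (K.apGood_infinite u) n
    simp [h1, h2]
  · intro m hm
    by_contra hne
    have htrue : (!(K.badAt m u) && decide (K.cntAG u m = n)) = true :=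
      Bool.ne_false_iff.1 (Ne.symm hne)
    rcases (Bool.and_eq_true _ _).mp htrue with ⟨h1, h2⟩
    have hb1 : K.badAt m u = false := (Bool.not_eq_true' _).mp h1
    have hb2 : K.cntAG u m = n := of_decide_eq_true h2
    have hnth : Nat.nth (fun t => K.badAt t u = false)
        (Nat.count (fun t => K.badAt t u = false) m) = m := Nat.nth_count hb1
    rw [← K.cntAG_eq_count, hb2] at hnth
    have : K.p n u = m := hnth
    omega

end Ctx

end Stmt16Comp
section Stmt16Idx

open Nat.Partrec (Code)
open Nat.Partrec.Code

/-- An index for `ℕ` itself. -/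
def eTop : ℕ := Encodable.encode (Code.zero)

lemma W_eTop : W eTop = Set.univ := by
  rw [eTop, W_encode]
  ext x
  simp only [WC, Set.mem_setOf_eq, Set.mem_univ, iff_true]
  trivial

namespace Ctx

variable {η : PosEq} (K : Ctx η)

/-- The partial function whose curried slices enumerate the sets `Γ t`. -/
def FG : ℕ →. ℕ := fun v =>
  Nat.rfind ↑(fun u => K.ΓAt v.unpair.1 v.unpair.2 u)

lemma partrec_FG : Partrec K.FG := by
  apply Partrec.rfind
  have h : Primrec fun q : ℕ × ℕ => K.ΓAt q.1.unpair.1 q.1.unpair.2 q.2 :=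
    K.primrec_ΓAt.comp
      (((Primrec.fst.comp (Primrec.unpair.comp Primrec.fst)).pair
        (Primrec.snd.comp (Primrec.unpair.comp Primrec.fst))).pair Primrec.snd)
  exact h.to₂.to_comp.partrec₂

/-- A code for `FG`. -/
noncomputable def cg : Code := (exists_code.1 (Partrec.nat_iff.1 K.partrec_FG)).choose

lemma cg_spec : K.cg.eval = K.FG :=
  (exists_code.1 (Partrec.nat_iff.1 K.partrec_FG)).choose_spec

/-- Indices for the sets `Γ t`, uniformly in `t`. -/
noncomputable def gIdx (t : ℕ) : ℕ := Encodable.encode (K.cg.curry t)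

lemma primrec_gIdx : Primrec K.gIdx :=
  Primrec.encode.comp (primrec₂_curry.comp (Primrec.const K.cg) Primrec.id)

lemma FG_dom_iff {t x : ℕ} : (K.FG (Nat.pair t x)).Dom ↔ x ∈ K.Γ t := by
  constructor
  · intro h
    rcases Nat.rfind_dom.1 h with ⟨u, hu, _⟩
    simp only [Nat.unpair_pair, PFun.coe_val, Part.mem_some_iff] at hu
    exact K.ΓAt_sound hu.symm
  · intro h
    rcases K.ΓAt_complete h with ⟨u, hu⟩
    apply Nat.rfind_dom.2
    refine ⟨u, ?_, fun {m} _ => trivial⟩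
    simp only [Nat.unpair_pair, PFun.coe_val, Part.mem_some_iff]
    exact hu.symm

lemma W_gIdx (t : ℕ) : W (K.gIdx t) = K.Γ t := by
  ext x
  rw [gIdx, W_encode]
  show (Code.eval (K.cg.curry t) x).Dom ↔ _
  rw [eval_curry, cg_spec]
  exact K.FG_dom_iff

/-- The partial function whose curried slices enumerate the marker sets `Wh n`. -/
noncomputable def FH : ℕ →. ℕ := fun v =>
  Nat.rfind ↑(fun u => K.ΓAt (K.p v.unpair.1 u + 1) v.unpair.2 u)

set_option maxHeartbeats 1000000 in
lemma partrec_FH : Partrec K.FH := by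
  apply Partrec.rfind
  have h : Computable fun q : ℕ × ℕ =>
      K.ΓAt (K.p q.1.unpair.1 q.2 + 1) q.1.unpair.2 q.2 := by
    have hp : Computable fun q : ℕ × ℕ => K.p q.1.unpair.1 q.2 :=
      K.computable_p.comp
        ((Primrec.fst.comp (Primrec.unpair.comp Primrec.fst)).to_comp) Computable.snd
    exact K.primrec_ΓAt.to_comp.comp
      (((Computable.succ.comp hp).pair
        ((Primrec.snd.comp (Primrec.unpair.comp Primrec.fst)).to_comp)).pair
        Computable.snd)
  exact h.to₂.partrec₂

/-- A code for `FH`. -/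
noncomputable def ch : Code := (exists_code.1 (Partrec.nat_iff.1 K.partrec_FH)).choose

lemma ch_spec : K.ch.eval = K.FH :=
  (exists_code.1 (Partrec.nat_iff.1 K.partrec_FH)).choose_spec

/-- Indices for the distinct members of the chain, uniformly. -/
noncomputable def hIdx (n : ℕ) : ℕ := Encodable.encode (K.ch.curry n)

lemma primrec_hIdx : Primrec K.hIdx :=
  Primrec.encode.comp (primrec₂_curry.comp (Primrec.const K.ch) Primrec.id)

lemma FH_dom_iff {n x : ℕ} : (K.FH (Nat.pair n x)).Dom ↔ x ∈ K.Wh n := by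
  constructor
  · intro h
    rcases Nat.rfind_dom.1 h with ⟨u, hu, _⟩
    simp only [Nat.unpair_pair, PFun.coe_val, Part.mem_some_iff] at hu
    exact ⟨u, hu.symm⟩
  · rintro ⟨u, hu⟩
    apply Nat.rfind_dom.2
    refine ⟨u, ?_, fun {m} _ => trivial⟩
    simp only [Nat.unpair_pair, PFun.coe_val, Part.mem_some_iff]
    exact hu.symm

lemma W_hIdx (n : ℕ) : W (K.hIdx n) = K.V n := by
  ext x
  rw [hIdx, W_encode]
  show (Code.eval (K.ch.curry n) x).Dom ↔ _
  rw [eval_curry, ch_spec, ← K.Wh_eq_V]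
  exact K.FH_dom_iff

/-- The one-one numbering of the family. -/
noncomputable def fIdx : ℕ → ℕ := fun i => Nat.casesOn i eTop (fun n => K.hIdx n)

lemma computable_fIdx : Computable K.fIdx := by
  apply Computable.nat_casesOn Computable.id (Computable.const eTop)
  exact (K.primrec_hIdx.to_comp.comp Computable.snd).to₂

@[simp] lemma fIdx_zero : K.fIdx 0 = eTop := rfl

@[simp] lemma fIdx_succ (n : ℕ) : K.fIdx (n + 1) = K.hIdx n := rfl

end Ctx

end Stmt16Idx
section Stmt16Learner

open Nat.Partrec (Code)
open Nat.Partrec.Code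

lemma seg_length (T : ℕ → Option ℕ) (n : ℕ) : (seg T n).length = n := by
  simp [seg]

lemma mem_seg_iff {T : ℕ → Option ℕ} {n : ℕ} {o : Option ℕ} :
    o ∈ seg T n ↔ ∃ i < n, T i = o := by
  simp [seg, List.mem_map]

lemma seg_mono_mem {T : ℕ → Option ℕ} {n m : ℕ} (h : n ≤ m) {o : Option ℕ}
    (ho : o ∈ seg T n) : o ∈ seg T m := by
  rcases mem_seg_iff.1 ho with ⟨i, hi, hio⟩
  exact mem_seg_iff.2 ⟨i, lt_of_lt_of_le hi h, hio⟩

lemma mem_cntT_of_mem_seg {T : ℕ → Option ℕ} {n x : ℕ}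
    (h : some x ∈ seg T n) : x ∈ cntT T := by
  rcases mem_seg_iff.1 h with ⟨i, _, hio⟩
  exact ⟨i, hio⟩

lemma seg_get?_lt (T : ℕ → Option ℕ) {i n : ℕ} (h : i < n) :
    (seg T n)[i]? = some (T i) := by
  rw [seg, List.getElem?_map, List.getElem?_range h]
  rfl

/-- For a finite collection of elements of the content of a text, some finite
initial segment (hence all longer ones) contains them all. -/
lemma finset_subset_seg {T : ℕ → Option ℕ} {F : Finset ℕ}
    (h : ∀ y ∈ F, y ∈ cntT T) : ∃ N, ∀ j, N ≤ j → ∀ y ∈ F, some y ∈ seg T j := by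
  have hmono : ∀ y u v, u ≤ v → (some y ∈ seg T u) → (some y ∈ seg T v) :=
    fun y u v huv hy => seg_mono_mem huv hy
  have hex : ∀ y ∈ F, ∃ u, some y ∈ seg T u := by
    intro y hy
    rcases h y hy with ⟨i, hi⟩
    exact ⟨i + 1, mem_seg_iff.2 ⟨i, Nat.lt_succ_self i, hi⟩⟩
  rcases exists_uniform_stage hmono hex with ⟨N, hN⟩
  exact ⟨N, fun j hj y hy => seg_mono_mem hj (hN y hy)⟩

/-- `some x` occurs in `σ`. -/
def memB (σ : List (Option ℕ)) (x : ℕ) : Bool :=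
  natAny (fun i => decide ((σ[i]?).getD none = some x)) σ.length

lemma memB_iff {σ : List (Option ℕ)} {x : ℕ} :
    memB σ x = true ↔ some x ∈ σ := by
  rw [memB, natAny_eq_true]
  constructor
  · rintro ⟨i, _, hi⟩
    have := of_decide_eq_true hi
    rcases hget : σ[i]? with _ | o
    · rw [hget] at this; simp at this
    · rw [hget] at this
      simp only [Option.getD_some] at this
      subst this
      exact List.mem_of_getElem? hget
  · intro h
    rcases List.mem_iff_getElem?.1 h with ⟨i, hi⟩
    have hlen : i < σ.length := List.getElem?_eq_some_iff.1 hi |>.1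
    refine ⟨i, hlen, ?_⟩
    rw [hi]
    simp

lemma primrec_memB : Primrec₂ memB := by
  have hget : Primrec₂ fun (q : List (Option ℕ) × ℕ) (i : ℕ) =>
      decide ((q.1[i]?).getD none = some q.2) := by
    have h1 : Primrec fun a : (List (Option ℕ) × ℕ) × ℕ => (a.1.1[a.2]?).getD none :=
      Primrec.option_getD.comp
        (Primrec.list_getElem?.comp (Primrec.fst.comp Primrec.fst) Primrec.snd)
        (Primrec.const none)
    have h2 : Primrec fun a : (List (Option ℕ) × ℕ) × ℕ => (some a.1.2 : Option ℕ) :=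
      Primrec.option_some.comp (Primrec.snd.comp Primrec.fst)
    exact (PrimrecPred.decide (Primrec.eq.comp h1 h2)).to₂
  have := (primrec_natAny hget).comp Primrec.id
    (Primrec.list_length.comp Primrec.fst)
  exact this.to₂.of_eq (fun σ x => rfl)

namespace Ctx

variable {η : PosEq} (K : Ctx η)

/-- Detector: some element of `σ` is confirmed equivalent to `c` within
`σ.length` steps. -/
def detB (σ : List (Option ℕ)) : Bool :=
  natAny (fun i => (((σ[i]?).getD none).map
    (fun y => K.relAt K.c y σ.length)).getD false) σ.length

/-- Every element confirmed in `S` within `t` steps occurs in `σ`. -/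
def covB (σ : List (Option ℕ)) (t : ℕ) : Bool :=
  natAll (fun y => !(K.sAt y t) || memB σ y) t

lemma detB_iff {σ : List (Option ℕ)} :
    K.detB σ = true ↔ ∃ y, some y ∈ σ ∧ K.relAt K.c y σ.length = true := by
  rw [detB, natAny_eq_true]
  constructor
  · rintro ⟨i, _, hi⟩
    rcases hget : σ[i]? with _ | o
    · rw [hget] at hi; simp at hi
    · rw [hget] at hi
      rcases o with _ | y
      · simp at hi
      · simp only [Option.getD_some, Option.map_some, Option.getD_some] at hi
        exact ⟨y, List.mem_of_getElem? hget, hi⟩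
  · rintro ⟨y, hy, hrel⟩
    rcases List.mem_iff_getElem?.1 hy with ⟨i, hi⟩
    have hlen : i < σ.length := List.getElem?_eq_some_iff.1 hi |>.1
    refine ⟨i, hlen, ?_⟩
    rw [hi]
    simpa using hrel

lemma covB_true_iff {σ : List (Option ℕ)} {t : ℕ} :
    K.covB σ t = true ↔ ∀ y, K.sAt y t = true → some y ∈ σ := by
  rw [covB, natAll_eq_true]
  constructor
  · intro h y hy
    have := h y (K.sAt_bound hy)
    rcases Bool.or_eq_true_iff.1 this with h1 | h1
    · rw [hy] at h1; simp at h1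
    · exact (memB_iff).1 h1
  · intro h y _
    by_cases hy : K.sAt y t = true
    · exact Bool.or_eq_true_iff.2 (Or.inr ((memB_iff).2 (h y hy)))
    · refine Bool.or_eq_true_iff.2 (Or.inl ?_)
      simp only [Bool.not_eq_true] at hy
      simp [hy]

lemma exists_covB_false (σ : List (Option ℕ)) : ∃ t, K.covB σ t = false := by
  rcases K.S_infinite.exists_notMem_finset (σ.filterMap id).toFinset with ⟨y, hyS, hyF⟩
  rcases K.sAt_complete hyS with ⟨u, hu⟩
  refine ⟨u, ?_⟩
  by_contra hcov
  rw [Bool.not_eq_false] at hcov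
  have := (K.covB_true_iff).1 hcov y hu
  apply hyF
  rw [List.mem_toFinset, List.mem_filterMap]
  exact ⟨some y, this, rfl⟩

/-- The learner's estimate: the least stage whose `S`-approximation is not
contained in the content of `σ`. -/
noncomputable def ρ (σ : List (Option ℕ)) : ℕ := sInf {t | K.covB σ t = false}

lemma ρ_spec (σ : List (Option ℕ)) : K.covB σ (K.ρ σ) = false :=
  Nat.sInf_mem (K.exists_covB_false σ)

lemma ρ_min {σ : List (Option ℕ)} {t : ℕ} (h : t < K.ρ σ) : K.covB σ t = true := by
  by_contra hc
  rw [Bool.not_eq_true] at hc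
  exact absurd (Nat.sInf_le hc) (not_le.2 h)

/-- The learner. -/
noncomputable def M : Learner := fun σ =>
  bif K.detB σ then some eTop else some (K.gIdx (K.ρ σ - 1))

lemma primrec_detB : Primrec K.detB := by
  have hget : Primrec₂ fun (σ : List (Option ℕ)) (i : ℕ) => (σ[i]?).getD none :=
    (Primrec.option_getD.comp (Primrec.list_getElem?.comp Primrec.fst Primrec.snd)
      (Primrec.const none)).to₂
  have hmap : Primrec₂ fun (σ : List (Option ℕ)) (i : ℕ) =>
      (((σ[i]?).getD none).map (fun y => K.relAt K.c y σ.length)).getD false := by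
    have hrel : Primrec₂ fun (q : List (Option ℕ) × ℕ) (y : ℕ) =>
        K.relAt K.c y q.1.length :=
      (K.primrec_relAt₂.comp
        ((Primrec.const K.c).pair Primrec.snd)
        (Primrec.list_length.comp (Primrec.fst.comp Primrec.fst))).to₂
    have hm : Primrec fun q : List (Option ℕ) × ℕ =>
        ((q.1[q.2]?).getD none).map (fun y => K.relAt K.c y q.1.length) :=
      Primrec.option_map (hget.comp Primrec.fst Primrec.snd) hrel
    exact (Primrec.option_getD.comp hm (Primrec.const false)).to₂
  have := (primrec_natAny hmap).comp Primrec.id Primrec.list_length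
  exact this.of_eq (fun σ => rfl)

lemma primrec_covB : Primrec₂ K.covB := by
  have hp : Primrec₂ fun (a : List (Option ℕ) × ℕ) (y : ℕ) =>
      (!(K.sAt y a.2) || memB a.1 y) := by
    have h1 : Primrec fun q : (List (Option ℕ) × ℕ) × ℕ => !(K.sAt q.2 q.1.2) :=
      (Primrec.dom_bool (!·)).comp
        (K.primrec_sAt.comp Primrec.snd (Primrec.snd.comp Primrec.fst))
    have h2 : Primrec fun q : (List (Option ℕ) × ℕ) × ℕ => memB q.1.1 q.2 :=
      primrec_memB.comp (Primrec.fst.comp Primrec.fst) Primrec.snd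
    exact ((Primrec.dom_bool₂ (· || ·)).comp h1 h2).to₂
  have := (primrec_natAll hp).comp Primrec.id Primrec.snd
  exact this.to₂.of_eq (fun σ t => rfl)

lemma computable_ρ : Computable K.ρ := by
  have hpred : Primrec₂ fun (σ : List (Option ℕ)) (t : ℕ) => !(K.covB σ t) :=
    ((Primrec.dom_bool (!·)).comp
      (K.primrec_covB.comp Primrec.fst Primrec.snd)).to₂
  have hf := Partrec.rfind hpred.to_comp.partrec₂
  apply Partrec.of_eq_tot hf
  intro σ
  rw [Nat.mem_rfind]
  simp only [PFun.coe_val, Part.mem_some_iff]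
  constructor
  · rw [K.ρ_spec σ]
    rfl
  · intro m hm
    rw [K.ρ_min hm]
    rfl

lemma computable_M : Computable K.M := by
  apply Computable.cond K.primrec_detB.to_comp (Computable.const (some eTop))
  have h : Computable fun σ : List (Option ℕ) => K.gIdx (K.ρ σ - 1) :=
    K.primrec_gIdx.to_comp.comp
      (Primrec.pred.to_comp.comp K.computable_ρ)
  exact Computable.option_some.comp h

end Ctx

end Stmt16Learner
section Stmt16Ex

namespace Ctx

variable {η : PosEq} (K : Ctx η)

lemma M_top_converges {T : ℕ → Option ℕ} (hT : IsText T Set.univ) :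
    ∃ N, ∀ j, N ≤ j → K.M (seg T j) = some eTop := by
  have hc : K.c ∈ cntT T := by rw [hT]; trivial
  rcases hc with ⟨q, hq⟩
  rcases K.relAt_complete (η.equiv.refl K.c) with ⟨u₀, hu₀⟩
  refine ⟨max (q + 1) u₀, fun j hj => ?_⟩
  have hq' : some K.c ∈ seg T j :=
    mem_seg_iff.2 ⟨q, lt_of_lt_of_le (by omega : q < max (q+1) u₀) hj, hq⟩
  have hdet : K.detB (seg T j) = true := by
    rw [K.detB_iff]
    refine ⟨K.c, hq', ?_⟩
    rw [seg_length]
    exact K.relAt_mono (le_trans (le_max_right _ _) hj) hu₀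
  rw [M, hdet]
  rfl

lemma detB_false_of_V {n : ℕ} {T : ℕ → Option ℕ} (hT : IsText T (K.V n)) (j : ℕ) :
    K.detB (seg T j) = false := by
  by_contra hdet
  rw [Bool.not_eq_false, K.detB_iff] at hdet
  rcases hdet with ⟨y, hy, hrel⟩
  have hyV : y ∈ K.V n := by
    rw [← hT]
    exact mem_cntT_of_mem_seg hy
  have hyS : y ∈ K.S := K.V_subset_S n hyV
  have hrcy : η.rel K.c y := K.relAt_sound hrel
  exact K.hc (K.hSclosed y hyS (η.equiv.symm hrcy))

/-- The canonical stage associated with `V n`. -/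
noncomputable def tstar (n : ℕ) : ℕ := sInf {t | ∃ y, K.sAt y t = true ∧ y ∉ K.V n}

lemma tstar_nonempty (n : ℕ) : {t | ∃ y, K.sAt y t = true ∧ y ∉ K.V n}.Nonempty := by
  rcases K.exists_mem_S_not_Γ (K.kth n + 1) with ⟨x, hxS, hxΓ⟩
  rcases K.sAt_complete hxS with ⟨u, hu⟩
  exact ⟨u, x, hu, hxΓ⟩

lemma tstar_spec (n : ℕ) : ∃ y, K.sAt y (K.tstar n) = true ∧ y ∉ K.V n :=
  Nat.sInf_mem (K.tstar_nonempty n)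

lemma tstar_min {n t : ℕ} (h : t < K.tstar n) :
    ∀ y, K.sAt y t = true → y ∈ K.V n := by
  intro y hy
  by_contra hyV
  exact absurd (Nat.sInf_le (show t ∈ {t | ∃ y, K.sAt y t = true ∧ y ∉ K.V n} from ⟨y, hy, hyV⟩)) (not_le.2 h)

lemma tstar_gt (n : ℕ) : K.kth n + 1 < K.tstar n := by
  by_contra hle
  push_neg at hle
  rcases K.tstar_spec n with ⟨y, hy, hyV⟩
  apply hyV
  have : y ∈ K.Γ (K.tstar n) := K.sAt_mem_Γ hy
  exact K.Γ_mono hle this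

lemma Γ_tstar_pred (n : ℕ) : K.Γ (K.tstar n - 1) = K.V n := by
  have hgt := K.tstar_gt n
  apply Set.Subset.antisymm
  · rintro x ⟨y, h1, h2⟩
    have hyV : y ∈ K.V n := K.tstar_min (by omega) y h1
    exact K.V_closed n y hyV h2
  · exact K.Γ_mono (by omega)

lemma M_V_converges {n : ℕ} {T : ℕ → Option ℕ} (hT : IsText T (K.V n)) :
    ∃ N, ∀ j, N ≤ j → K.M (seg T j) = some (K.gIdx (K.tstar n - 1)) := by
  classical
  set t' := K.tstar n with ht'
  have hgt := K.tstar_gt n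
  -- the finitely many elements that must appear
  set F : Finset ℕ := (Finset.range t').filter (fun y => K.sAt y (t' - 1) = true) with hF
  have hFsub : ∀ y ∈ F, y ∈ cntT T := by
    intro y hy
    rw [hF, Finset.mem_filter] at hy
    have : y ∈ K.V n := K.tstar_min (by omega) y hy.2
    rw [hT]
    exact this
  rcases finset_subset_seg hFsub with ⟨N₁, hN₁⟩
  refine ⟨max N₁ t', fun j hj => ?_⟩
  have hcovlt : ∀ t < t', K.covB (seg T j) t = true := by
    intro t ht
    rw [K.covB_true_iff]
    intro y hy
    have hyb : y < t := K.sAt_bound hy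
    have hyF : y ∈ F := by
      rw [hF, Finset.mem_filter, Finset.mem_range]
      exact ⟨by omega, K.sAt_mono (by omega) hy⟩
    exact hN₁ j (le_trans (le_max_left _ _) hj) y hyF
  have hcovt' : K.covB (seg T j) t' = false := by
    rcases K.tstar_spec n with ⟨y, hy, hyV⟩
    by_contra hcov
    rw [Bool.not_eq_false, K.covB_true_iff] at hcov
    have := hcov y hy
    apply hyV
    rw [← hT]
    exact mem_cntT_of_mem_seg this
  have hρ : K.ρ (seg T j) = t' := by
    have h1 : K.ρ (seg T j) ≤ t' := Nat.sInf_le hcovt'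
    rcases lt_or_eq_of_le h1 with hlt | heq
    · exfalso
      have := hcovlt _ hlt
      rw [K.ρ_spec (seg T j)] at this
      simp at this
    · exact heq
  rw [M, K.detB_false_of_V hT j, hρ]
  rfl

theorem exLearns : ExLearnsIn W K.M (Set.range fun i => W (K.fIdx i)) := by
  rintro L ⟨i, rfl⟩ T hT
  rcases i with _ | n
  · simp only [fIdx_zero, W_eTop] at hT ⊢
    rcases K.M_top_converges hT with ⟨N, hN⟩
    refine ⟨N, eTop, hN N le_rfl, W_eTop, fun j hj => ?_⟩
    rw [hN j hj, hN N le_rfl]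
  · simp only [fIdx_succ, W_hIdx] at hT ⊢
    rcases K.M_V_converges hT with ⟨N, hN⟩
    refine ⟨N, K.gIdx (K.tstar n - 1), hN N le_rfl, ?_, fun j hj => ?_⟩
    · rw [W_gIdx, K.Γ_tstar_pred]
    · rw [hN j hj, hN N le_rfl]

end Ctx

end Stmt16Ex
section Stmt16Fam

namespace Ctx

variable {η : PosEq} (K : Ctx η)

/-- The family witnessing Statement 16. -/
def fam : Set (Set ℕ) := Set.range fun i => W (K.fIdx i)

lemma top_mem_fam : Set.univ ∈ K.fam := ⟨0, by simp only [fIdx_zero, W_eTop]⟩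

lemma V_mem_fam (n : ℕ) : K.V n ∈ K.fam :=
  ⟨n + 1, by simp only [fIdx_succ, W_hIdx]⟩

lemma fIdx_injective_on_W : ∀ i j, W (K.fIdx i) = W (K.fIdx j) → i = j := by
  have hVuniv : ∀ n, K.V n ≠ Set.univ := by
    intro n h
    exact K.c_not_mem_V n (h ▸ Set.mem_univ K.c)
  intro i j hij
  rcases i with _ | n <;> rcases j with _ | m
  · rfl
  · rw [fIdx_zero, W_eTop, fIdx_succ, W_hIdx] at hij
    exact absurd hij.symm (hVuniv m)
  · rw [fIdx_zero, W_eTop, fIdx_succ, W_hIdx] at hij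
    exact absurd hij (hVuniv n)
  · rw [fIdx_succ, W_hIdx, fIdx_succ, W_hIdx] at hij
    by_contra hne
    exact K.V_ne (fun h : n = m => hne (by rw [h])) hij

theorem etaFamily_fam : EtaFamily η K.fam := by
  constructor
  · rintro L ⟨i, rfl⟩
    rcases i with _ | n
    · simp only [fIdx_zero, W_eTop]
      intro x _ y _
      trivial
    · simp only [fIdx_succ, W_hIdx]
      exact K.V_closed n
  · exact ⟨K.fIdx, K.computable_fIdx, K.fIdx_injective_on_W, rfl⟩

theorem exLearnable_fam : ExLearnable K.fam :=
  ⟨K.M, K.computable_M, K.exLearns⟩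

end Ctx

end Stmt16Fam
section Stmt16Diag

lemma getD_eq_of_prefix {l₁ l₂ : List (Option ℕ)} (h : l₁ <+: l₂) {i : ℕ}
    (hi : i < l₁.length) (d : Option ℕ) : l₁.getD i d = l₂.getD i d := by
  rcases h with ⟨t, rfl⟩
  exact (List.getD_append _ _ _ _ hi).symm

lemma seg_prefix (T : ℕ → Option ℕ) {a b : ℕ} (h : a ≤ b) :
    seg T a <+: seg T b := by
  have : seg T a = (seg T b).take a := by
    rw [seg, seg, ← List.map_take, List.take_range, Nat.min_eq_left h]
  rw [this]
  exact List.take_prefix a (seg T b)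

/-- A text starting with `σ` and then enumerating the range of `en`. -/
def extT (σ : List (Option ℕ)) (en : ℕ → ℕ) : ℕ → Option ℕ := fun i =>
  if h : i < σ.length then σ.get ⟨i, h⟩ else some (en (i - σ.length))

lemma extT_lt {σ : List (Option ℕ)} {en : ℕ → ℕ} {i : ℕ} (h : i < σ.length) :
    extT σ en i = σ.get ⟨i, h⟩ := dif_pos h

lemma extT_ge {σ : List (Option ℕ)} {en : ℕ → ℕ} {i : ℕ} (h : σ.length ≤ i) :
    extT σ en i = some (en (i - σ.length)) := dif_neg (by omega)

lemma exists_text_extend {L : Set ℕ} (hL : L.Nonempty) {σ : List (Option ℕ)}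
    (hσ : cntL σ ⊆ L) : ∃ T, IsText T L ∧ seg T σ.length = σ := by
  rcases (Set.to_countable L).exists_eq_range hL with ⟨en, hen⟩
  refine ⟨extT σ en, ?_, ?_⟩
  · apply Set.Subset.antisymm
    · rintro x ⟨i, hi⟩
      by_cases h : i < σ.length
      · rw [extT_lt h] at hi
        apply hσ
        show some x ∈ σ
        rw [← hi]
        exact List.get_mem σ _
      · rw [extT_ge (by omega)] at hi
        have : x ∈ Set.range en := ⟨i - σ.length, by injection hi⟩
        rw [hen]
        exact this
    · intro x hx
      rw [hen] at hx
      rcases hx with ⟨m, hm⟩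
      refine ⟨σ.length + m, ?_⟩
      rw [extT_ge (by omega)]
      simp [hm]
  · apply List.ext_getElem?
    intro i
    rcases Nat.lt_or_ge i σ.length with hi | hi
    · rw [seg_get?_lt _ hi, extT_lt hi, List.getElem?_eq_getElem hi]
      rfl
    · rw [List.getElem?_eq_none (by rw [seg_length]; omega),
        List.getElem?_eq_none (by omega)]

namespace Ctx

variable {η : PosEq} (K : Ctx η)

lemma step (M : Learner) (hEx : ExLearnsIn W M K.fam) (n : ℕ)
    (σ : List (Option ℕ)) (hσ : cntL σ ⊆ K.V n) :
    ∃ σ', σ <+: σ' ∧ σ.length < σ'.length ∧ cntL σ' ⊆ K.V n ∧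
      ∃ e, M σ' = some e ∧ W e = K.V n := by
  rcases exists_text_extend (K.V_nonempty n) hσ with ⟨T, hT, hseg⟩
  have hTfam : IsText T (W (K.fIdx (n+1))) := by
    simpa only [fIdx_succ, W_hIdx] using hT
  rcases hEx _ ⟨n+1, rfl⟩ T hTfam with ⟨m, e, hme, hWe, hstab⟩
  have hWe' : W e = K.V n := by
    rw [hWe]
    simp only [fIdx_succ, W_hIdx]
  refine ⟨seg T (max m σ.length + 1), ?_, ?_, ?_, e, ?_, hWe'⟩
  · have h1 : σ.length ≤ max m σ.length + 1 := by
      have := le_max_right m σ.length; omega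
    have h2 := seg_prefix T h1
    rwa [hseg] at h2
  · rw [seg_length]
    have := le_max_right m σ.length
    omega
  · intro x hx
    have : x ∈ cntT T := mem_cntT_of_mem_seg hx
    rwa [hT] at this
  · rw [hstab _ (by omega), hme]

/-- The diagonal sequence of finite texts against a would-be weakly confident
learner `M`, bundled with its invariant. -/
noncomputable def diagP (M : Learner) (hEx : ExLearnsIn W M K.fam) :
    (n : ℕ) → {σ : List (Option ℕ) // cntL σ ⊆ K.V n} := fun n =>
  Nat.rec ⟨[], fun x hx => absurd hx List.not_mem_nil⟩
    (fun k ih => ⟨(K.step M hEx k ih.1 ih.2).choose,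
      fun x hx => K.V_mono (Nat.le_succ k)
        ((K.step M hEx k ih.1 ih.2).choose_spec.2.2.1 hx)⟩) n

/-- The diagonal sequence of finite texts. -/
noncomputable def diag (M : Learner) (hEx : ExLearnsIn W M K.fam) (n : ℕ) :
    List (Option ℕ) := (K.diagP M hEx n).1

variable {M : Learner} (hEx : ExLearnsIn W M K.fam)

lemma diag_spec (n : ℕ) :
    K.diag M hEx n <+: K.diag M hEx (n + 1) ∧
    (K.diag M hEx n).length < (K.diag M hEx (n + 1)).length ∧
    ∃ e, M (K.diag M hEx (n + 1)) = some e ∧ W e = K.V n := by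
  have hspec := (K.step M hEx n (K.diagP M hEx n).1 (K.diagP M hEx n).2).choose_spec
  exact ⟨hspec.1, hspec.2.1, hspec.2.2.2⟩

lemma diag_len (n : ℕ) : n ≤ (K.diag M hEx n).length := by
  induction n with
  | zero => omega
  | succ n ih =>
    have := (K.diag_spec hEx n).2.1
    omega

lemma diag_prefix {a b : ℕ} (h : a ≤ b) :
    K.diag M hEx a <+: K.diag M hEx b := by
  induction b with
  | zero =>
    cases Nat.le_zero.1 h
    exact List.prefix_refl _
  | succ b ih =>
    rcases Nat.lt_or_ge a (b+1) with hlt | hge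
    · exact List.IsPrefix.trans (ih (by omega)) (K.diag_spec hEx b).1
    · cases Nat.le_antisymm h hge
      exact List.prefix_refl _

/-- The diagonal text. -/
noncomputable def dT : ℕ → Option ℕ := fun i => (K.diag M hEx (i + 1)).getD i none

lemma seg_dT (k : ℕ) :
    seg (K.dT hEx) ((K.diag M hEx k).length) = K.diag M hEx k := by
  apply List.ext_getElem?
  intro i
  rcases Nat.lt_or_ge i (K.diag M hEx k).length with hi | hi
  · rw [seg_get?_lt _ hi, List.getElem?_eq_getElem hi]
    congr 1
    show (K.diag M hEx (i + 1)).getD i none = _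
    rcases Nat.le_total (i + 1) k with hik | hik
    · rw [getD_eq_of_prefix (K.diag_prefix hEx hik)
        (lt_of_lt_of_le (Nat.lt_succ_self i) (K.diag_len hEx (i+1))) none]
      exact List.getD_eq_getElem _ _ hi
    · rw [← getD_eq_of_prefix (K.diag_prefix hEx hik) hi none]
      exact List.getD_eq_getElem _ _ hi
  · rw [List.getElem?_eq_none (by rw [seg_length]; omega), List.getElem?_eq_none hi]

theorem notWConf : ¬ WConfLearnable K.fam := by
  rintro ⟨M, -, hEx, hConv⟩
  have hcons : ∃ L ∈ K.fam, cntT (K.dT hEx) ⊆ L :=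
    ⟨Set.univ, K.top_mem_fam, fun x _ => trivial⟩
  rcases hConv _ hcons with ⟨N, hN⟩
  have key : ∀ k, N ≤ (K.diag M hEx (k + 1)).length →
      M (K.diag M hEx (k + 1)) = M (seg (K.dT hEx) N) := by
    intro k hk
    rw [← K.seg_dT hEx (k + 1)]
    exact hN _ hk
  rcases (K.diag_spec hEx N).2.2 with ⟨e₁, he₁, hW₁⟩
  rcases (K.diag_spec hEx (N + 1)).2.2 with ⟨e₂, he₂, hW₂⟩
  have hlen1 : N ≤ (K.diag M hEx (N + 1)).length := by
    have := K.diag_len hEx (N + 1); omega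
  have hlen2 : N ≤ (K.diag M hEx (N + 2)).length := by
    have := K.diag_len hEx (N + 2); omega
  have hsome : some e₁ = some e₂ := by
    rw [← he₁, ← he₂, key N hlen1, key (N + 1) hlen2]
  have hee : e₁ = e₂ := by injection hsome
  apply K.V_ne (show N ≠ N + 1 by omega)
  rw [← hW₁, ← hW₂, hee]

end Ctx

end Stmt16Diag
/-- If there are at least two η-infinite r.e. sets, then there is
an η-family that is explanatorily learnable but not weakly confidently
learnable. -/
theorem stmt16 (η : PosEq)
    (h : ∃ S₁ S₂ : Set ℕ, S₁ ≠ S₂ ∧ RESet S₁ ∧ RESet S₂ ∧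
      EtaInfinite η S₁ ∧ EtaInfinite η S₂) :
    ∃ C : Set (Set ℕ), EtaFamily η C ∧ ExLearnable C ∧ ¬ WConfLearnable C := by
  classical
  obtain ⟨S₁, S₂, hne, ⟨e₁, hW1⟩, ⟨e₂, hW2⟩, hI₁, hI₂⟩ := h
  obtain ⟨eη, heη⟩ := η.re
  have hη' : ∀ x y, η.rel x y ↔ Nat.pair x y ∈ WC (Denumerable.ofNat Nat.Partrec.Code eη) := by
    intro x y
    rw [heη x y]
    rfl
  have hx : ∃ x, (x ∈ S₁ ∧ x ∉ S₂) ∨ (x ∈ S₂ ∧ x ∉ S₁) := by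
    by_contra hcon
    push_neg at hcon
    apply hne
    ext x
    have h1 := (hcon x).1
    have h2 := (hcon x).2
    constructor
    · intro hx1
      by_contra hx2
      exact hx2 (h1 hx1)
    · intro hx2
      by_contra hx1
      exact hx1 (h2 hx2)
  obtain ⟨x, hcase⟩ := hx
  rcases hcase with ⟨hx1, hx2⟩ | ⟨hx2, hx1⟩
  · -- x ∈ S₁ \ S₂ : use S := S₂, c := x
    have hWC : WC (Denumerable.ofNat Nat.Partrec.Code e₂) = S₂ := hW2
    have K : Ctx η :=
      { cη := Denumerable.ofNat Nat.Partrec.Code eη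
        hη := hη'
        cS := Denumerable.ofNat Nat.Partrec.Code e₂
        c := x
        hSclosed := by rw [hWC]; exact hI₂.1
        hSinf := by rw [hWC]; exact hI₂.2
        hc := by rw [hWC]; exact hx2 }
    exact ⟨K.fam, K.etaFamily_fam, K.exLearnable_fam, K.notWConf⟩
  · -- x ∈ S₂ \ S₁ : use S := S₁, c := x
    have hWC : WC (Denumerable.ofNat Nat.Partrec.Code e₁) = S₁ := hW1
    have K : Ctx η :=
      { cη := Denumerable.ofNat Nat.Partrec.Code eη
        hη := hη'
        cS := Denumerable.ofNat Nat.Partrec.Code e₁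
        c := x
        hSclosed := by rw [hWC]; exact hI₁.1
        hSinf := by rw [hWC]; exact hI₁.2
        hc := by rw [hWC]; exact hx1 }
    exact ⟨K.fam, K.etaFamily_fam, K.exLearnable_fam, K.notWConf⟩

end PEL
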